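/- In a tree that is uniformly refined to level L, a contiguous segment of the Morton curve that ends with the last level-L quadrant creates exactly one face-connected subdomain, no matter where it begins. Precisely: for every a with 0 ≤ a < 2^{dL}, the set of level-L quadrants {Q : a ≤ Q ≤ 2^{dL} − 1} is face-connected. -/

import Mathlib

/-- The `r`-th coordinate (1 ≤ r ≤ d) of a level-`L` quadrant `Q` in dimension `d`. -/
def mortonCoord (d L r Q : ℕ) : ℕ :=
  ∑ ℓ ∈ Finset.range L, (Q / 2 ^ (ℓ * d + (r - 1)) % 2) * 2 ^ ℓ

/-- Two level-`L` quadrants are face-neighbors: they differ by exactly one in exactly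
one coordinate and agree in all other coordinates. -/
def MortonFaceNbr (d L Q Q' : ℕ) : Prop :=
  Q ≠ Q' ∧ ∃ r, 1 ≤ r ∧ r ≤ d ∧
    ((mortonCoord d L r Q : ℤ) - (mortonCoord d L r Q' : ℤ)).natAbs = 1 ∧
    ∀ s, 1 ≤ s → s ≤ d → s ≠ r → mortonCoord d L s Q = mortonCoord d L s Q'

/-- A set of level-`L` quadrants is face-connected: the graph on `S` whose edges join
face-neighbors is connected. -/
def MortonFaceConnected (d L : ℕ) (S : Set ℕ) : Prop :=
  ∀ Q ∈ S, ∀ Q' ∈ S,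
    Relation.ReflTransGen (fun a b => a ∈ S ∧ b ∈ S ∧ MortonFaceNbr d L a b) Q Q'

/-- `S` has at most `n` face-connected components: it can be written as a union of `n`
face-connected subsets. -/
def MortonCompBound (d L : ℕ) (S : Set ℕ) (n : ℕ) : Prop :=
  ∃ f : Fin n → Set ℕ, S = ⋃ i, f i ∧ ∀ i, MortonFaceConnected d L (f i)

/-! ### Auxiliary machinery -/

/-- Spread the bits of `c` with stride `d`. -/
def spreadAux (d L c : ℕ) : ℕ := ∑ ℓ ∈ Finset.range L, (c / 2 ^ ℓ % 2) * 2 ^ (ℓ * d)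

/-- Morton (bit-interleaving) encoding of coordinates `f 0, …, f (d-1)`. -/
def mortonEnc (d L : ℕ) (f : ℕ → ℕ) : ℕ :=
  ∑ ℓ ∈ Finset.range L, ∑ i ∈ Finset.range d, (f i / 2 ^ ℓ % 2) * 2 ^ (ℓ * d + i)

lemma sum_two_pow (n : ℕ) : ∑ i ∈ Finset.range n, 2 ^ i = 2 ^ n - 1 := by
  induction n with
  | zero => simp
  | succ n ih =>
    rw [Finset.sum_range_succ, ih]
    have := Nat.one_le_two_pow (n := n); rw [pow_succ]; omega

lemma spread_succ (d L c : ℕ) :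
    spreadAux d (L + 1) c = c % 2 + 2 ^ d * spreadAux d L (c / 2) := by
  rw [spreadAux, Finset.sum_range_succ', spreadAux, Finset.mul_sum]
  rw [add_comm]
  congr 1
  · simp
  · apply Finset.sum_congr rfl
    intro ℓ _
    have h1 : c / 2 ^ (ℓ + 1) = c / 2 / 2 ^ ℓ := by
      rw [Nat.div_div_eq_div_mul, ← pow_succ']
    have h2 : 2 ^ ((ℓ + 1) * d) = 2 ^ d * 2 ^ (ℓ * d) := by
      rw [← pow_add]; ring_nf
    rw [h1, h2]; ring

lemma coord_succ (d L r Q : ℕ) :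
    mortonCoord d (L + 1) r Q = Q / 2 ^ (r - 1) % 2 + 2 * mortonCoord d L r (Q / 2 ^ d) := by
  rw [mortonCoord, Finset.sum_range_succ', mortonCoord, Finset.mul_sum]
  rw [add_comm]
  congr 1
  · simp
  · apply Finset.sum_congr rfl
    intro ℓ _
    have h1 : Q / 2 ^ ((ℓ + 1) * d + (r - 1)) = Q / 2 ^ d / 2 ^ (ℓ * d + (r - 1)) := by
      rw [Nat.div_div_eq_div_mul, ← pow_add]
      congr 1; ring
    rw [h1, pow_succ]; ring

lemma enc_succ (d L : ℕ) (f : ℕ → ℕ) :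
    mortonEnc d (L + 1) f =
      (∑ i ∈ Finset.range d, (f i % 2) * 2 ^ i) + 2 ^ d * mortonEnc d L (fun i => f i / 2) := by
  rw [mortonEnc, Finset.sum_range_succ', mortonEnc, Finset.mul_sum]
  rw [add_comm]
  congr 1
  · simp
  · apply Finset.sum_congr rfl
    intro ℓ _
    rw [Finset.mul_sum]
    apply Finset.sum_congr rfl
    intro i _
    have h1 : f i / 2 ^ (ℓ + 1) = f i / 2 / 2 ^ ℓ := by
      rw [Nat.div_div_eq_div_mul, ← pow_succ']
    have h2 : 2 ^ ((ℓ + 1) * d + i) = 2 ^ d * 2 ^ (ℓ * d + i) := by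
      rw [← pow_add]; congr 1; ring
    rw [h1, h2]; ring

lemma low_lt (d : ℕ) (f : ℕ → ℕ) : (∑ i ∈ Finset.range d, (f i % 2) * 2 ^ i) < 2 ^ d := by
  have h : (∑ i ∈ Finset.range d, (f i % 2) * 2 ^ i) ≤ ∑ i ∈ Finset.range d, 2 ^ i := by
    apply Finset.sum_le_sum
    intro i _
    have : f i % 2 ≤ 1 := by omega
    calc (f i % 2) * 2 ^ i ≤ 1 * 2 ^ i := Nat.mul_le_mul_right _ this
    _ = 2 ^ i := one_mul _
  rw [sum_two_pow] at h
  have := Nat.one_le_two_pow (n := d); omega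

lemma enc_lt (d L : ℕ) (f : ℕ → ℕ) : mortonEnc d L f < 2 ^ (d * L) := by
  induction L generalizing f with
  | zero => simp [mortonEnc]
  | succ L ih =>
    rw [enc_succ]
    have h1 := low_lt d f
    have h2 := ih (fun i => f i / 2)
    have h3 : 2 ^ (d * (L + 1)) = 2 ^ d * 2 ^ (d * L) := by
      rw [← pow_add]; congr 1; ring
    rw [h3]
    have h4 : 2 ^ d * mortonEnc d L (fun i => f i / 2) + 2 ^ d ≤ 2 ^ d * 2 ^ (d * L) := by
      have : mortonEnc d L (fun i => f i / 2) + 1 ≤ 2 ^ (d * L) := h2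
      calc 2 ^ d * mortonEnc d L (fun i => f i / 2) + 2 ^ d
          = 2 ^ d * (mortonEnc d L (fun i => f i / 2) + 1) := by ring
        _ ≤ 2 ^ d * 2 ^ (d * L) := Nat.mul_le_mul_left _ this
    omega

lemma coord_lt (d L r Q : ℕ) : mortonCoord d L r Q < 2 ^ L := by
  have h : mortonCoord d L r Q ≤ ∑ ℓ ∈ Finset.range L, 2 ^ ℓ := by
    apply Finset.sum_le_sum
    intro ℓ _
    have : Q / 2 ^ (ℓ * d + (r - 1)) % 2 ≤ 1 := by omega
    calc (Q / 2 ^ (ℓ * d + (r - 1)) % 2) * 2 ^ ℓ ≤ 1 * 2 ^ ℓ := Nat.mul_le_mul_right _ this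
    _ = 2 ^ ℓ := one_mul _
  rw [sum_two_pow] at h
  have := Nat.one_le_two_pow (n := L); omega

lemma digit_add_high (x y j k : ℕ) (h : j < k) :
    (x + 2 ^ k * y) / 2 ^ j % 2 = x / 2 ^ j % 2 := by
  obtain ⟨t, rfl⟩ := Nat.exists_eq_add_of_lt h
  have h1 : 2 ^ (j + t + 1) * y = 2 ^ j * (2 * (2 ^ t * y)) := by
    rw [show j + t + 1 = j + (t + 1) by ring, pow_add, pow_succ]; ring
  rw [h1, Nat.add_mul_div_left _ _ (Nat.two_pow_pos j),
    Nat.add_mul_mod_self_left]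

lemma low_digit (d : ℕ) (f : ℕ → ℕ) (j : ℕ) (hj : j < d) :
    (∑ i ∈ Finset.range d, (f i % 2) * 2 ^ i) / 2 ^ j % 2 = f j % 2 := by
  induction d with
  | zero => omega
  | succ d ih =>
    rw [Finset.sum_range_succ]
    rcases Nat.lt_or_ge j d with h | h
    · rw [mul_comm, digit_add_high _ _ _ _ h, ih h]
    · have hj' : j = d := by omega
      subst hj'
      have h1 := low_lt j f
      rw [mul_comm, Nat.add_mul_div_left _ _ (Nat.two_pow_pos j),
        Nat.div_eq_of_lt h1]
      simp [Nat.mod_mod_of_dvd]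

lemma coord_enc (d L r : ℕ) (f : ℕ → ℕ) (hr1 : 1 ≤ r) (hrd : r ≤ d) :
    mortonCoord d L r (mortonEnc d L f) = f (r - 1) % 2 ^ L := by
  induction L generalizing f with
  | zero => simp [mortonCoord, Nat.mod_one]
  | succ L ih =>
    rw [coord_succ, enc_succ]
    have hrd' : r - 1 < d := by omega
    have h1 : ((∑ i ∈ Finset.range d, (f i % 2) * 2 ^ i) + 2 ^ d * mortonEnc d L (fun i => f i / 2))
        / 2 ^ (r - 1) % 2 = f (r - 1) % 2 := by
      rw [digit_add_high _ _ _ _ hrd', low_digit _ _ _ hrd']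
    have h2 : ((∑ i ∈ Finset.range d, (f i % 2) * 2 ^ i) + 2 ^ d * mortonEnc d L (fun i => f i / 2))
        / 2 ^ d = mortonEnc d L (fun i => f i / 2) := by
      rw [Nat.add_mul_div_left _ _ (Nat.two_pow_pos d),
        Nat.div_eq_of_lt (low_lt d f), zero_add]
    rw [h1, h2, ih]
    rw [show (2:ℕ) ^ (L + 1) = 2 * 2 ^ L by rw [pow_succ']]
    rw [Nat.mod_mul]

lemma digits_sum (d Q : ℕ) : ∑ i ∈ Finset.range d, (Q / 2 ^ i % 2) * 2 ^ i = Q % 2 ^ d := by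
  induction d with
  | zero => simp [Nat.mod_one]
  | succ d ih =>
    rw [Finset.sum_range_succ, ih, Nat.mod_pow_succ]
    ring

lemma enc_coord (d L Q : ℕ) (hQ : Q < 2 ^ (d * L)) :
    mortonEnc d L (fun i => mortonCoord d L (i + 1) Q) = Q := by
  induction L generalizing Q with
  | zero =>
    have : Q = 0 := by simpa using hQ
    subst this
    simp [mortonEnc]
  | succ L ih =>
    rw [enc_succ]
    have hc : ∀ i : ℕ, mortonCoord d (L + 1) (i + 1) Q
        = Q / 2 ^ i % 2 + 2 * mortonCoord d L (i + 1) (Q / 2 ^ d) := by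
      intro i
      rw [coord_succ]
      simp
    have hlow : (∑ i ∈ Finset.range d, (mortonCoord d (L + 1) (i + 1) Q % 2) * 2 ^ i)
        = Q % 2 ^ d := by
      rw [← digits_sum d Q]
      apply Finset.sum_congr rfl
      intro i _
      rw [hc i, Nat.add_mul_mod_self_left, Nat.mod_mod_of_dvd _ (by norm_num)]
    have hdiv : (fun i => mortonCoord d (L + 1) (i + 1) Q / 2)
        = fun i => mortonCoord d L (i + 1) (Q / 2 ^ d) := by
      funext i
      rw [hc i]
      omega
    have hQd : Q / 2 ^ d < 2 ^ (d * L) := by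
      rw [Nat.div_lt_iff_lt_mul (Nat.two_pow_pos d)]
      calc Q < 2 ^ (d * (L + 1)) := hQ
      _ = 2 ^ (d * L) * 2 ^ d := by rw [Nat.mul_succ, pow_add]
    rw [hlow, hdiv, ih _ hQd, Nat.mod_add_div]

lemma enc_as_spread (d L : ℕ) (f : ℕ → ℕ) :
    mortonEnc d L f = ∑ i ∈ Finset.range d, 2 ^ i * spreadAux d L (f i) := by
  rw [mortonEnc, Finset.sum_comm]
  apply Finset.sum_congr rfl
  intro i _
  rw [spreadAux, Finset.mul_sum]
  apply Finset.sum_congr rfl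
  intro ℓ _
  rw [pow_add]; ring

lemma spread_strictMono (d L : ℕ) (hd : 1 ≤ d) :
    ∀ c c' : ℕ, c < c' → c' < 2 ^ L → spreadAux d L c < spreadAux d L c' := by
  induction L with
  | zero => intro c c' h1 h2; omega
  | succ L ih =>
    intro c c' h1 h2
    rw [spread_succ, spread_succ]
    rcases Nat.lt_or_ge (c / 2) (c' / 2) with h | h
    · have hc' : c' / 2 < 2 ^ L := by
        rw [Nat.div_lt_iff_lt_mul (by norm_num)]
        rw [pow_succ] at h2; omega
      have hih := ih (c / 2) (c' / 2) h hc'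
      have h2d : 2 ≤ 2 ^ d := by
        calc 2 = 2 ^ 1 := (pow_one 2).symm
        _ ≤ 2 ^ d := Nat.pow_le_pow_right (by norm_num) hd
      have : 2 ^ d * (spreadAux d L (c / 2) + 1) ≤ 2 ^ d * spreadAux d L (c' / 2) :=
        Nat.mul_le_mul_left _ hih
      have hc2 : c % 2 ≤ 1 := by omega
      nlinarith [Nat.zero_le (c' % 2)]
    · have heq : c / 2 = c' / 2 := by omega
      have : c % 2 < c' % 2 := by omega
      rw [heq]; omega

lemma enc_const_max (d L : ℕ) : mortonEnc d L (fun _ => 2 ^ L - 1) = 2 ^ (d * L) - 1 := by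
  induction L with
  | zero => simp [mortonEnc]
  | succ L ih =>
    rw [enc_succ]
    have hsplit : 2 ^ (L + 1) - 1 = 2 * (2 ^ L - 1) + 1 := by
      have := Nat.one_le_two_pow (n := L); rw [pow_succ]; omega
    have hmod : (2 ^ (L + 1) - 1) % 2 = 1 := by rw [hsplit]; omega
    have hdiv : (2 ^ (L + 1) - 1) / 2 = 2 ^ L - 1 := by rw [hsplit]; omega
    have hlow : (∑ i ∈ Finset.range d, ((2 ^ (L + 1) - 1) % 2) * 2 ^ i) = 2 ^ d - 1 := by
      rw [hmod]; simp [sum_two_pow]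
    rw [hlow, hdiv, ih]
    have h1 := Nat.one_le_two_pow (n := d)
    have h2 := Nat.one_le_two_pow (n := d * L)
    have h3 : 2 ^ (d * (L + 1)) = 2 ^ d * 2 ^ (d * L) := by rw [← pow_add]; congr 1; ring
    rw [h3]
    obtain ⟨y, hy⟩ : ∃ y, 2 ^ (d * L) = y + 1 := ⟨2 ^ (d * L) - 1, by omega⟩
    rw [hy, Nat.add_sub_cancel, mul_add, mul_one]
    omega

lemma nbr_symm (d L Q Q' : ℕ) (h : MortonFaceNbr d L Q Q') : MortonFaceNbr d L Q' Q := by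
  obtain ⟨hne, r, hr1, hrd, habs, hoth⟩ := h
  refine ⟨hne.symm, r, hr1, hrd, ?_, fun s h1 h2 h3 => (hoth s h1 h2 h3).symm⟩
  rw [← habs, ← Int.natAbs_neg]; congr 1; ring

/-- Key step: any quadrant below the maximum has a strictly larger face-neighbor. -/
lemma exists_larger_nbr (d L Q : ℕ) (hd : 1 ≤ d) (hQ : Q < 2 ^ (d * L) - 1) :
    ∃ Q', Q < Q' ∧ Q' < 2 ^ (d * L) ∧ MortonFaceNbr d L Q Q' := by
  set f : ℕ → ℕ := fun i => mortonCoord d L (i + 1) Q with hf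
  have hQlt : Q < 2 ^ (d * L) := by omega
  have hencQ : mortonEnc d L f = Q := enc_coord d L Q hQlt
  -- some coordinate is below the max
  have hex : ∃ i0, i0 < d ∧ f i0 < 2 ^ L - 1 := by
    by_contra hcon
    push_neg at hcon
    have hcongr : mortonEnc d L f = mortonEnc d L (fun _ => 2 ^ L - 1) := by
      unfold mortonEnc
      apply Finset.sum_congr rfl
      intro ℓ _
      apply Finset.sum_congr rfl
      intro i hi
      have hi' : i < d := Finset.mem_range.mp hi
      have h1 := hcon i hi'
      have h2 : f i < 2 ^ L := coord_lt d L (i + 1) Q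
      have h3 : f i = 2 ^ L - 1 := by omega
      rw [h3]
    rw [hencQ, enc_const_max] at hcongr
    omega
  obtain ⟨i0, hi0d, hi0⟩ := hex
  set g : ℕ → ℕ := Function.update f i0 (f i0 + 1) with hg
  refine ⟨mortonEnc d L g, ?_, enc_lt d L g, ?_⟩
  · -- Q < enc g
    rw [← hencQ, enc_as_spread, enc_as_spread]
    have hupd : (fun i => 2 ^ i * spreadAux d L (g i))
        = Function.update (fun i => 2 ^ i * spreadAux d L (f i)) i0
            (2 ^ i0 * spreadAux d L (f i0 + 1)) := by
      funext i
      rcases eq_or_ne i i0 with rfl | hne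
      · simp [hg]
      · simp [hg, Function.update_of_ne hne]
    rw [hupd, Finset.sum_update_of_mem (Finset.mem_range.mpr hi0d)]
    rw [← Finset.add_sum_erase _ _ (Finset.mem_range.mpr hi0d)]
    have : Finset.range d \ {i0} = (Finset.range d).erase i0 := by
      rw [Finset.erase_eq]
    rw [this]
    have hsp : spreadAux d L (f i0) < spreadAux d L (f i0 + 1) :=
      spread_strictMono d L hd _ _ (by omega) (by omega)
    have : 2 ^ i0 * spreadAux d L (f i0) < 2 ^ i0 * spreadAux d L (f i0 + 1) :=
      mul_lt_mul_of_pos_left hsp (Nat.two_pow_pos i0)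
    omega
  · -- face neighbor
    have hglt : ∀ i, i < d → g i < 2 ^ L := by
      intro i hi
      rcases eq_or_ne i i0 with rfl | hne
      · simp only [hg, Function.update_self]; omega
      · simp only [hg, Function.update_of_ne hne, hf]
        exact coord_lt d L (i + 1) Q
    have hQne : Q ≠ mortonEnc d L g := by
      intro h
      -- from previous part we'd need Q < enc g; instead use coordinate difference
      have h1 : mortonCoord d L (i0 + 1) (mortonEnc d L g) = f i0 + 1 := by
        rw [coord_enc d L (i0 + 1) g (by omega) (by omega)]
        simp only [Nat.add_sub_cancel, hg, Function.update_self]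
        exact Nat.mod_eq_of_lt (by omega)
      rw [← h] at h1
      simp only [hf] at h1
      omega
    refine ⟨hQne, i0 + 1, by omega, by omega, ?_, ?_⟩
    · rw [coord_enc d L (i0 + 1) g (by omega) (by omega)]
      simp only [Nat.add_sub_cancel, hg, Function.update_self]
      rw [Nat.mod_eq_of_lt (by omega)]
      have : mortonCoord d L (i0 + 1) Q = f i0 := rfl
      rw [this]
      simp
    · intro s hs1 hsd hsne
      rw [coord_enc d L s g hs1 hsd]
      have hsd' : s - 1 ≠ i0 := by omega
      simp only [hg, Function.update_of_ne hsd']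
      rw [Nat.mod_eq_of_lt]
      · simp only [hf]
        congr 1
        omega
      · exact coord_lt d L (s - 1 + 1) Q

theorem morton_segment_to_last_connected (d L a : ℕ) (hd : 1 ≤ d)
    (ha : a < 2 ^ (d * L)) :
    MortonFaceConnected d L (Set.Icc a (2 ^ (d * L) - 1)) := by
  set M := 2 ^ (d * L) - 1 with hM
  set S := Set.Icc a M with hS
  set rel := fun x y : ℕ => x ∈ S ∧ y ∈ S ∧ MortonFaceNbr d L x y with hrel
  have hMS : M ∈ S := by
    constructor
    · omega
    · exact le_refl M
  have key : ∀ n Q, Q ∈ S → M - Q ≤ n → Relation.ReflTransGen rel Q M := by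
    intro n
    induction n with
    | zero =>
      intro Q hQ hn
      have : Q = M := by
        have := hQ.2; omega
      rw [this]
    | succ n ih =>
      intro Q hQ hn
      rcases eq_or_lt_of_le hQ.2 with heq | hlt
      · rw [heq]
      · obtain ⟨Q', hQQ', hQ'lt, hnbr⟩ := exists_larger_nbr d L Q hd (by omega)
        have hQ'S : Q' ∈ S := ⟨by have := hQ.1; omega, by omega⟩
        exact Relation.ReflTransGen.head ⟨hQ, hQ'S, hnbr⟩ (ih Q' hQ'S (by omega))
  have hsymm : Symmetric rel := by
    intro x y ⟨h1, h2, h3⟩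
    exact ⟨h2, h1, nbr_symm d L x y h3⟩
  intro Q hQ Q' hQ'
  exact (key (M - Q) Q hQ le_rfl).trans
    (by haveI : Std.Symm rel := ⟨fun _ _ h => hsymm h⟩; exact Std.Symm.symm _ _ (key (M - Q') Q' hQ' le_rfl))
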